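/- Rectangular bases: for n ≥ 2, define ψ_rect ∈ (ℂ²)^{⊗n} as the vector with amplitude 2^{−(n−1)/2} on the computational basis state |0,1,1,…,1⟩ and on every computational basis state |1,j₂,…,j_n⟩ with (j₂,…,j_n) ≠ (0,…,0), and amplitude 0 on all other basis states. Then ψ_rect is a unit vector and its orbit {U_g ψ_rect : g ∈ {0,1}ⁿ} under G_tetra^{(n)} is an orthonormal basis of (ℂ²)^{⊗n}. -/

import Mathlib

open Matrix Complex Finset

/-- Pauli X. -/
noncomputable def X2 : Matrix (Fin 2) (Fin 2) ℂ := !![0, 1; 1, 0]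

/-- Pauli Y. -/
noncomputable def Y2 : Matrix (Fin 2) (Fin 2) ℂ := !![0, -Complex.I; Complex.I, 0]

/-- Pauli Z. -/
noncomputable def Z2 : Matrix (Fin 2) (Fin 2) ℂ := !![1, 0; 0, -1]

/-- Tensor product of single-qubit operators, as a matrix on (ℂ²)^{⊗n}. -/
noncomputable def tensorOp2 {n : ℕ} (A : Fin n → Matrix (Fin 2) (Fin 2) ℂ) :
    Matrix (Fin n → Fin 2) (Fin n → Fin 2) ℂ :=
  Matrix.of fun v w => ∏ i, A i (v i) (w i)

/-- Single-site operator A acting on qubit i (identity elsewhere). -/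
noncomputable def single2 {n : ℕ} (i : Fin n) (A : Matrix (Fin 2) (Fin 2) ℂ) :
    Matrix (Fin n → Fin 2) (Fin n → Fin 2) ℂ :=
  tensorOp2 fun j => if j = i then A else 1

/-- The inner product ⟨f, g⟩ = Σ conj(f v) g v (antilinear in the first argument). -/
noncomputable def dotc {ι : Type*} [Fintype ι] (f g : ι → ℂ) : ℂ :=
  ∑ v, (starRingEnd ℂ) (f v) * g v

/-- The unitaries U_g of G_tetra^{(n)}, g = (z₁,…,z_{n−1},x) ∈ {0,1}ⁿ:
U_g = (Z^{(1)}Z^{(2)})^{z₁}···(Z^{(n−1)}Z^{(n)})^{z_{n−1}}·(X⊗⋯⊗X)^x. -/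
noncomputable def Ug2 (n : ℕ) [NeZero n] (g : Fin n → Fin 2) :
    Matrix (Fin n → Fin 2) (Fin n → Fin 2) ℂ :=
  (((List.finRange (n - 1)).map fun i =>
      (single2 (⟨i.val, by have := i.isLt; omega⟩ : Fin n) Z2 *
          single2 (⟨i.val + 1, by have := i.isLt; omega⟩ : Fin n) Z2)
        ^ (g ⟨i.val, by have := i.isLt; omega⟩).val).prod) *
    (tensorOp2 fun _ : Fin n => X2)
      ^ (g ⟨n - 1, by have := Nat.pos_of_ne_zero (NeZero.ne n); omega⟩).val
/-- The rectangular fiducial state: amplitude 2^{−(n−1)/2} on |0,1,…,1⟩ and on every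
|1,j₂,…,jₙ⟩ with (j₂,…,jₙ) ≠ (0,…,0); zero elsewhere. -/
noncomputable def psiRect (n : ℕ) [NeZero n] : (Fin n → Fin 2) → ℂ := fun w =>
  if (w 0 = 0 ∧ ∀ i : Fin n, i ≠ 0 → w i = 1) ∨
     (w 0 = 1 ∧ ∃ i : Fin n, i ≠ 0 ∧ w i = 1)
  then ((Real.sqrt 2 : ℂ) ^ (n - 1))⁻¹ else 0


namespace Stmt16Aux


lemma Z2_apply (a b : Fin 2) : Z2 a b = if a = b then (-1 : ℂ) ^ a.val else 0 := by
  fin_cases a <;> fin_cases b <;> simp [Z2]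

lemma X2_apply (a b : Fin 2) : X2 a b = if b = a + 1 then 1 else 0 := by
  fin_cases a <;> fin_cases b <;> simp [X2]

lemma single2_Z {n : ℕ} (i : Fin n) :
    single2 i Z2 = Matrix.diagonal (fun v : Fin n → Fin 2 => (-1 : ℂ) ^ (v i).val) := by
  ext v w
  simp only [single2, tensorOp2, Matrix.of_apply, Matrix.diagonal_apply]
  rw [← Finset.mul_prod_erase Finset.univ _ (Finset.mem_univ i)]
  rw [if_pos rfl]
  have h2 : ∀ j ∈ Finset.univ.erase i,
      (if j = i then Z2 else (1 : Matrix (Fin 2) (Fin 2) ℂ)) (v j) (w j)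
        = if v j = w j then 1 else 0 := by
    intro j hj
    rw [if_neg (Finset.mem_erase.mp hj).1, Matrix.one_apply]
  rw [Finset.prod_congr rfl h2, Finset.prod_boole, Z2_apply]
  by_cases hvw : v = w
  · subst hvw; simp
  · rw [if_neg hvw]
    by_cases hvi : v i = w i
    · have : ¬ ∀ j ∈ Finset.univ.erase i, v j = w j := by
        intro hall
        apply hvw
        funext j
        by_cases hji : j = i
        · subst hji; exact hvi
        · exact hall j (Finset.mem_erase.mpr ⟨hji, Finset.mem_univ j⟩)
      rw [if_neg this]; ring
    · rw [if_neg hvi]; ring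

lemma tensorX_mulVec {n : ℕ} (f : (Fin n → Fin 2) → ℂ) :
    (tensorOp2 fun _ : Fin n => X2) *ᵥ f = fun v => f (fun j => v j + 1) := by
  funext v
  simp only [Matrix.mulVec, dotProduct, tensorOp2, Matrix.of_apply, X2_apply]
  have : ∀ w : Fin n → Fin 2,
      (∏ i, if w i = v i + 1 then (1:ℂ) else 0) = if w = (fun j => v j + 1) then 1 else 0 := by
    intro w
    rw [Finset.prod_boole]
    congr 1
    simp [funext_iff]
  simp only [this, ite_mul, one_mul, zero_mul]
  rw [Finset.sum_ite_eq' Finset.univ]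
  simp





noncomputable def chi {m : ℕ} (z : Fin m → Fin 2) (v : Fin (m+1) → Fin 2) : ℂ :=
  ∏ i : Fin m, ((-1 : ℂ) ^ ((v i.castSucc).val + (v i.succ).val)) ^ (z i).val

lemma Ug2_mulVec {m : ℕ} (g : Fin (m+1) → Fin 2) (f : (Fin (m+1) → Fin 2) → ℂ) :
    Ug2 (m+1) g *ᵥ f = fun v => chi (fun i => g i.castSucc) v *
      (if g (Fin.last m) = 1 then f (fun j => v j + 1) else f v) := by
  have hz : (((List.finRange m).map fun i : Fin m =>
      (single2 i.castSucc Z2 * single2 i.succ Z2) ^ (g i.castSucc).val).prod)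
      = Matrix.diagonal (fun v => chi (fun i => g i.castSucc) v) := by
    have key : ∀ i : Fin m, (single2 i.castSucc Z2 * single2 i.succ Z2) ^ (g i.castSucc).val
        = Matrix.diagonalRingHom (Fin (m+1) → Fin 2) ℂ (fun v : Fin (m+1) → Fin 2 =>
            ((-1 : ℂ) ^ ((v i.castSucc).val + (v i.succ).val)) ^ (g i.castSucc).val) := by
      intro i
      rw [single2_Z, single2_Z]
      show _ = Matrix.diagonal _
      rw [Matrix.diagonal_mul_diagonal, Matrix.diagonal_pow]
      apply congrArg Matrix.diagonal
      funext v
      simp [Pi.pow_apply, pow_add]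
    rw [List.map_congr_left (fun i _ => key i)]
    rw [show (List.map (fun i : Fin m => Matrix.diagonalRingHom (Fin (m+1) → Fin 2) ℂ
        (fun v : Fin (m+1) → Fin 2 =>
          ((-1 : ℂ) ^ ((v i.castSucc).val + (v i.succ).val)) ^ (g i.castSucc).val))
        (List.finRange m))
      = List.map (Matrix.diagonalRingHom (Fin (m+1) → Fin 2) ℂ)
          (List.map (fun i : Fin m => (fun v : Fin (m+1) → Fin 2 =>
            ((-1 : ℂ) ^ ((v i.castSucc).val + (v i.succ).val)) ^ (g i.castSucc).val))
            (List.finRange m)) from (List.map_map).symm]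
    rw [← map_list_prod (Matrix.diagonalRingHom (Fin (m+1) → Fin 2) ℂ)]
    rw [← Fin.prod_univ_def]
    show Matrix.diagonal _ = _
    apply congrArg Matrix.diagonal
    funext v
    rw [Finset.prod_apply]
    rfl
  show ((((List.finRange m).map fun i : Fin m =>
      (single2 i.castSucc Z2 * single2 i.succ Z2) ^ (g i.castSucc).val).prod) *
      (tensorOp2 fun _ : Fin (m+1) => X2) ^ (g (Fin.last m)).val) *ᵥ f = _
  rw [hz, ← Matrix.mulVec_mulVec]
  have h2 : (g (Fin.last m)) = 0 ∨ (g (Fin.last m)) = 1 := by omega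
  rcases h2 with h2 | h2 <;> rw [h2] <;> funext v
  · simp only [Fin.val_zero, pow_zero, Matrix.one_mulVec]
    rw [Matrix.mulVec_diagonal]
    simp
  · simp only [Fin.val_one, pow_one, tensorX_mulVec]
    rw [Matrix.mulVec_diagonal]
    simp


lemma fin2_add_cancel : ∀ a b : Fin 2, a + (b + a) = b := by decide
lemma fin2_add_add : ∀ a b : Fin 2, a + b + a = b := by decide
lemma fin2_eq_of_add_eq_zero : ∀ a b : Fin 2, a + b = 0 → a = b := by decide
lemma neg_one_pow_val (a b : Fin 2) :
    (-1 : ℂ) ^ (a.val + b.val) = (-1 : ℂ) ^ ((a + b : Fin 2)).val := by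
  fin_cases a <;> fin_cases b <;> norm_num [show ((2:Fin 2)).val = 0 from rfl, show ((1:Fin 2) + 1).val = 0 from rfl]
lemma neg_one_pow_flip (a b : Fin 2) :
    (-1 : ℂ) ^ ((a + 1 : Fin 2).val + (b + 1 : Fin 2).val) = (-1 : ℂ) ^ (a.val + b.val) := by
  fin_cases a <;> fin_cases b <;> norm_num [show ((2:Fin 2)).val = 0 from rfl, show ((1:Fin 2) + 1).val = 0 from rfl]

lemma pow_parity {t : ℂ} (ht : t ^ 2 = 1) (k : ℕ) : t ^ k = t ^ (k % 2) := by
  conv_lhs => rw [← Nat.div_add_mod k 2]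
  rw [pow_add, pow_mul, ht, one_pow, one_mul]

lemma chi_zero {m : ℕ} (v : Fin (m+1) → Fin 2) : chi 0 v = 1 := by simp [chi]

lemma chi_mul {m : ℕ} (z z' : Fin m → Fin 2) (v : Fin (m+1) → Fin 2) :
    chi z v * chi z' v = chi (z + z') v := by
  unfold chi
  rw [← Finset.prod_mul_distrib]
  apply Finset.prod_congr rfl
  intro i _
  set t : ℂ := (-1 : ℂ) ^ ((v i.castSucc).val + (v i.succ).val) with hT
  have ht : t ^ 2 = 1 := by rw [hT, ← pow_mul, mul_comm, pow_mul]; norm_num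
  rw [← pow_add, pow_parity ht, pow_parity ht ((z + z') i).val]
  congr 1
  simp only [Pi.add_apply, Fin.add_def]
  omega

lemma chi_conj {m : ℕ} (z : Fin m → Fin 2) (v : Fin (m+1) → Fin 2) :
    (starRingEnd ℂ) (chi z v) = chi z v := by
  simp [chi, map_prod, map_pow]

lemma chi_flip {m : ℕ} (z : Fin m → Fin 2) (v : Fin (m+1) → Fin 2) :
    chi z (fun j => v j + 1) = chi z v := by
  unfold chi
  apply Finset.prod_congr rfl
  intro i _
  rw [neg_one_pow_flip]

def flipPerm (n : ℕ) : Equiv.Perm (Fin n → Fin 2) :=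
  Function.Involutive.toPerm (fun v => fun j => v j + 1) (by
    intro v; funext j; exact (by decide : ∀ a : Fin 2, a + 1 + 1 = a) (v j))

noncomputable def Fmap {m : ℕ} (y : Fin (m+1) → Fin 2) : Fin (m+1) → Fin 2 :=
  fun j => ∑ k ∈ Finset.Iic j, y k

noncomputable def Gmap {m : ℕ} (w : Fin (m+1) → Fin 2) : Fin (m+1) → Fin 2 :=
  fun j => Fin.cases (w 0) (fun i => w i.castSucc + w i.succ) j

lemma Iic_zero' {m : ℕ} : (Finset.Iic (0 : Fin (m+1))) = {0} := by
  ext k; simp [Fin.le_zero_iff]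

lemma Iic_succ' {m : ℕ} (i : Fin m) :
    Finset.Iic (i.succ : Fin (m+1)) = insert i.succ (Finset.Iic i.castSucc) := by
  ext k
  simp only [Finset.mem_Iic, Finset.mem_insert, Fin.le_def, Fin.ext_iff, Fin.val_succ,
    Fin.coe_castSucc]
  omega

lemma succ_not_mem_Iic {m : ℕ} (i : Fin m) :
    (i.succ : Fin (m+1)) ∉ Finset.Iic i.castSucc := by
  simp [Finset.mem_Iic, Fin.le_def]

lemma Fmap_zero {m : ℕ} (y : Fin (m+1) → Fin 2) : Fmap y 0 = y 0 := by
  simp [Fmap, Iic_zero']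

lemma Fmap_succ {m : ℕ} (y : Fin (m+1) → Fin 2) (i : Fin m) :
    Fmap y i.succ = y i.succ + Fmap y i.castSucc := by
  simp [Fmap, Iic_succ', Finset.sum_insert (succ_not_mem_Iic i)]

lemma Gmap_Fmap {m : ℕ} (y : Fin (m+1) → Fin 2) : Gmap (Fmap y) = y := by
  funext j
  induction j using Fin.cases with
  | zero => simp [Gmap, Fmap_zero]
  | succ i =>
    show Fmap y i.castSucc + Fmap y i.succ = y i.succ
    rw [Fmap_succ]
    exact fin2_add_cancel _ _

lemma Fmap_Gmap {m : ℕ} (w : Fin (m+1) → Fin 2) : Fmap (Gmap w) = w := by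
  funext j
  induction j using Fin.induction with
  | zero => rw [Fmap_zero]; rfl
  | succ i ih =>
    rw [Fmap_succ, ih]
    show w i.castSucc + w i.succ + w i.castSucc = w i.succ
    exact fin2_add_add _ _

noncomputable def prefixEquiv (m : ℕ) : Equiv (Fin (m+1) → Fin 2) (Fin (m+1) → Fin 2) :=
  ⟨Fmap, Gmap, Gmap_Fmap, Fmap_Gmap⟩

lemma chi_Fmap {m : ℕ} (z : Fin m → Fin 2) (y : Fin (m+1) → Fin 2) :
    chi z (Fmap y) = ∏ i : Fin m, ((-1 : ℂ) ^ (y i.succ).val) ^ (z i).val := by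
  unfold chi
  apply Finset.prod_congr rfl
  intro i _
  rw [neg_one_pow_val,
    show Fmap y i.castSucc + Fmap y i.succ = y i.succ from congrFun (Gmap_Fmap y) i.succ]


lemma sum_chi_cond {m : ℕ} (z : Fin m → Fin 2) :
    ∑ v : Fin (m+1) → Fin 2, (if v 0 = 1 then chi z v else 0)
      = if z = 0 then (2 : ℂ) ^ m else 0 := by
  rw [← Fintype.sum_bijective Fmap (prefixEquiv m).bijective _ _ (fun y => rfl)]
  have step1 : ∀ y : Fin (m+1) → Fin 2,
      (if Fmap y 0 = 1 then chi z (Fmap y) else 0)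
        = (if y 0 = 1 then ∏ i : Fin m, ((-1 : ℂ) ^ (y i.succ).val) ^ (z i).val else 0) := by
    intro y
    rw [Fmap_zero, chi_Fmap]
  rw [Finset.sum_congr rfl (fun y _ => step1 y)]
  have heq := (Fintype.sum_equiv (Fin.consEquiv (fun _ : Fin (m+1) => Fin 2))
      (fun p : Fin 2 × (Fin m → Fin 2) =>
        if p.1 = 1 then ∏ i : Fin m, ((-1 : ℂ) ^ (p.2 i).val) ^ (z i).val else 0)
      (fun y => if y 0 = 1 then ∏ i : Fin m, ((-1 : ℂ) ^ (y i.succ).val) ^ (z i).val else 0)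
      (fun p => by simp [Fin.consEquiv])).symm
  rw [heq]
  rw [Fintype.sum_prod_type]
  rw [Finset.sum_eq_single (1 : Fin 2) (by intro b _ hb; simp [hb]) (by simp)]
  simp only [if_pos rfl, ite_true, eq_self_iff_true]
  have : ∀ i : Fin m, (∑ a : Fin 2, ((-1 : ℂ) ^ (a : Fin 2).val) ^ (z i).val)
      = if z i = 0 then 2 else 0 := by
    intro i
    rw [Fin.sum_univ_two]
    have : z i = 0 ∨ z i = 1 := by omega
    rcases this with h | h <;> rw [h] <;> norm_num
  rw [← Fintype.piFinset_univ, ← Finset.prod_univ_sum (fun _ => Finset.univ)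
    (fun i a => ((-1 : ℂ) ^ (a : Fin 2).val) ^ (z i).val)]
  rw [Finset.prod_congr rfl (fun i _ => this i)]
  by_cases hz : z = 0
  · subst hz; simp
  · rw [if_neg hz]
    obtain ⟨i, hi⟩ : ∃ i, z i ≠ 0 := by
      by_contra h
      push_neg at h
      exact hz (funext h)
    exact Finset.prod_eq_zero (Finset.mem_univ i) (by rw [if_neg hi])


def e0 (m : ℕ) : Fin (m+1) → Fin 2 := fun j => if j = 0 then 0 else 1
def d1 (m : ℕ) : Fin (m+1) → Fin 2 := fun j => if j = 0 then 1 else 0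

lemma chi_e0 {m : ℕ} (hm : 0 < m) (z : Fin m → Fin 2) :
    chi z (e0 m) = (-1 : ℂ) ^ (z ⟨0, hm⟩).val := by
  unfold chi
  rw [Fintype.prod_eq_single (⟨0, hm⟩ : Fin m)]
  · have h1 : (⟨0, hm⟩ : Fin m).castSucc = 0 := rfl
    have h2 : e0 m ((⟨0, hm⟩ : Fin m).castSucc) = 0 := by rw [h1]; simp [e0]
    have h3 : e0 m ((⟨0, hm⟩ : Fin m).succ) = 1 := by
      simp [e0, Fin.ext_iff]
    rw [h2, h3]
    norm_num
  · intro i hi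
    have hcs : i.castSucc ≠ 0 := by
      intro h
      apply hi
      have hval : i.val = 0 := by simpa [Fin.ext_iff] using h
      exact Fin.ext hval
    have hs : i.succ ≠ (0 : Fin (m+1)) := Fin.succ_ne_zero i
    simp [e0, hcs, hs]

lemma chi_d1 {m : ℕ} (hm : 0 < m) (z : Fin m → Fin 2) :
    chi z (d1 m) = (-1 : ℂ) ^ (z ⟨0, hm⟩).val := by
  unfold chi
  rw [Fintype.prod_eq_single (⟨0, hm⟩ : Fin m)]
  · have h1 : (⟨0, hm⟩ : Fin m).castSucc = 0 := rfl
    have h2 : d1 m ((⟨0, hm⟩ : Fin m).castSucc) = 1 := by rw [h1]; simp [d1]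
    have h3 : d1 m ((⟨0, hm⟩ : Fin m).succ) = 0 := by
      simp [d1, Fin.ext_iff]
    rw [h2, h3]
    norm_num
  · intro i hi
    have hcs : i.castSucc ≠ 0 := by
      intro h
      apply hi
      have hval : i.val = 0 := by simpa [Fin.ext_iff] using h
      exact Fin.ext hval
    have hs : i.succ ≠ (0 : Fin (m+1)) := Fin.succ_ne_zero i
    simp [d1, hcs, hs]

lemma sum_support_chi {m : ℕ} (hm : 0 < m) (z : Fin m → Fin 2) :
    (∑ v : Fin (m+1) → Fin 2,
      if (v 0 = 0 ∧ ∀ i : Fin (m+1), i ≠ 0 → v i = 1) ∨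
         (v 0 = 1 ∧ ∃ i : Fin (m+1), i ≠ 0 ∧ v i = 1)
       then chi z v else 0)
      = if z = 0 then (2 : ℂ) ^ m else 0 := by
  have key : ∀ v : Fin (m+1) → Fin 2,
      (if (v 0 = 0 ∧ ∀ i : Fin (m+1), i ≠ 0 → v i = 1) ∨
          (v 0 = 1 ∧ ∃ i : Fin (m+1), i ≠ 0 ∧ v i = 1)
       then chi z v else 0)
      = (if v 0 = 1 then chi z v else 0) + (if v = e0 m then chi z v else 0)
          - (if v = d1 m then chi z v else 0) := by
    intro v
    have h0 : v 0 = 0 ∨ v 0 = 1 := by omega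
    rcases h0 with h0 | h0
    · have hd : v ≠ d1 m := by
        intro h; rw [h] at h0; exact absurd h0 (by simp [d1])
      have h01 : ¬ (v 0 = 1) := by rw [h0]; decide
      by_cases he : v = e0 m
      · have hP : (v 0 = 0 ∧ ∀ i : Fin (m+1), i ≠ 0 → v i = 1) ∨
            (v 0 = 1 ∧ ∃ i : Fin (m+1), i ≠ 0 ∧ v i = 1) :=
          Or.inl ⟨h0, fun i hi => by rw [he]; simp [e0, hi]⟩
        rw [if_pos hP, if_neg h01, if_pos he, if_neg hd]; ring
      · have hP : ¬ ((v 0 = 0 ∧ ∀ i : Fin (m+1), i ≠ 0 → v i = 1) ∨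
            (v 0 = 1 ∧ ∃ i : Fin (m+1), i ≠ 0 ∧ v i = 1)) := by
          rintro (⟨_, hall⟩ | ⟨h1, _⟩)
          · apply he
            funext j
            by_cases hj : j = 0
            · rw [hj, h0]; simp [e0]
            · rw [hall j hj]; simp [e0, hj]
          · rw [h0] at h1; exact absurd h1 (by decide)
        rw [if_neg hP, if_neg h01, if_neg he, if_neg hd]; ring
    · have he : v ≠ e0 m := by
        intro h; rw [h] at h0; exact absurd h0 (by simp [e0])
      by_cases hd : v = d1 m
      · have hP : ¬ ((v 0 = 0 ∧ ∀ i : Fin (m+1), i ≠ 0 → v i = 1) ∨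
            (v 0 = 1 ∧ ∃ i : Fin (m+1), i ≠ 0 ∧ v i = 1)) := by
          rintro (⟨hz, _⟩ | ⟨_, i, hi, h1⟩)
          · rw [h0] at hz; exact absurd hz (by decide)
          · rw [hd] at h1; simp [d1, hi] at h1
        rw [if_neg hP, if_pos h0, if_neg he, if_pos hd]; ring
      · have hP : (v 0 = 0 ∧ ∀ i : Fin (m+1), i ≠ 0 → v i = 1) ∨
            (v 0 = 1 ∧ ∃ i : Fin (m+1), i ≠ 0 ∧ v i = 1) := by
          right
          refine ⟨h0, ?_⟩
          by_contra hne
          push_neg at hne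
          apply hd
          funext j
          by_cases hj : j = 0
          · rw [hj, h0]; simp [d1]
          · have : v j ≠ 1 := hne j hj
            have : v j = 0 := by omega
            rw [this]; simp [d1, hj]
        rw [if_pos hP, if_pos h0, if_neg he, if_neg hd]; ring
  rw [Finset.sum_congr rfl (fun v _ => key v)]
  rw [Finset.sum_sub_distrib, Finset.sum_add_distrib]
  rw [Finset.sum_ite_eq' Finset.univ (e0 m) (chi z),
    Finset.sum_ite_eq' Finset.univ (d1 m) (chi z)]
  rw [sum_chi_cond z, chi_e0 hm z, chi_d1 hm z]
  simp





lemma sqrt2_sq : ((Real.sqrt 2 : ℝ) : ℂ) * ((Real.sqrt 2 : ℝ) : ℂ) = 2 := by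
  rw [← Complex.ofReal_mul, Real.mul_self_sqrt (by norm_num)]
  norm_num

lemma psiRect_conj {m : ℕ} (v : Fin (m+1) → Fin 2) :
    (starRingEnd ℂ) (psiRect (m+1) v) = psiRect (m+1) v := by
  unfold psiRect
  split_ifs
  · simp [map_inv₀, map_pow, Complex.conj_ofReal]
  · simp

lemma psiRect_sq {m : ℕ} (v : Fin (m+1) → Fin 2) :
    (starRingEnd ℂ) (psiRect (m+1) v) * psiRect (m+1) v
      = if (v 0 = 0 ∧ ∀ i : Fin (m+1), i ≠ 0 → v i = 1) ∨
           (v 0 = 1 ∧ ∃ i : Fin (m+1), i ≠ 0 ∧ v i = 1)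
        then ((2 : ℂ) ^ m)⁻¹ else 0 := by
  unfold psiRect
  split_ifs
  · rw [map_inv₀, map_pow, Complex.conj_ofReal]
    rw [← mul_inv, ← mul_pow, sqrt2_sq]
    norm_num
  · simp

lemma psiRect_flip {m : ℕ} (v : Fin (m+1) → Fin 2) :
    psiRect (m+1) v * psiRect (m+1) (fun j => v j + 1) = 0 := by
  unfold psiRect
  by_cases hP : (v 0 = 0 ∧ ∀ i : Fin (m+1), i ≠ 0 → v i = 1) ∨
      (v 0 = 1 ∧ ∃ i : Fin (m+1), i ≠ 0 ∧ v i = 1)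
  · rw [if_pos hP]
    have hnP : ¬ (((fun j => v j + 1) 0 = 0 ∧ ∀ i : Fin (m+1), i ≠ 0 → (fun j => v j + 1) i = 1) ∨
        ((fun j => v j + 1) 0 = 1 ∧ ∃ i : Fin (m+1), i ≠ 0 ∧ (fun j => v j + 1) i = 1)) := by
      simp only
      rcases hP with ⟨h0, hall⟩ | ⟨h0, i0, hi0, h1⟩
      · rintro (⟨hz, _⟩ | ⟨_, i, hi, h1⟩)
        · rw [h0] at hz; exact absurd hz (by decide)
        · rw [hall i hi] at h1; exact absurd h1 (by decide)
      · rintro (⟨_, hall⟩ | ⟨hz, _⟩)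
        · have := hall i0 hi0; rw [h1] at this; exact absurd this (by decide)
        · rw [h0] at hz; exact absurd hz (by decide)
    rw [if_neg hnP, mul_zero]
  · rw [if_neg hP, zero_mul]

lemma ortho_core {m : ℕ} (hm : 0 < m) (k : Fin m → Fin 2) :
    ∑ v : Fin (m+1) → Fin 2,
      chi k v * (if (v 0 = 0 ∧ ∀ i : Fin (m+1), i ≠ 0 → v i = 1) ∨
           (v 0 = 1 ∧ ∃ i : Fin (m+1), i ≠ 0 ∧ v i = 1)
        then ((2 : ℂ) ^ m)⁻¹ else 0)
      = if k = 0 then 1 else 0 := by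
  have step : ∀ v : Fin (m+1) → Fin 2,
      chi k v * (if (v 0 = 0 ∧ ∀ i : Fin (m+1), i ≠ 0 → v i = 1) ∨
           (v 0 = 1 ∧ ∃ i : Fin (m+1), i ≠ 0 ∧ v i = 1)
        then ((2 : ℂ) ^ m)⁻¹ else 0)
      = ((2 : ℂ) ^ m)⁻¹ * (if (v 0 = 0 ∧ ∀ i : Fin (m+1), i ≠ 0 → v i = 1) ∨
           (v 0 = 1 ∧ ∃ i : Fin (m+1), i ≠ 0 ∧ v i = 1)
        then chi k v else 0) := by
    intro v
    split_ifs <;> ring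
  rw [Finset.sum_congr rfl (fun v _ => step v), ← Finset.mul_sum, sum_support_chi hm k]
  split_ifs
  · rw [inv_mul_cancel₀ (pow_ne_zero m two_ne_zero)]
  · rw [mul_zero]




lemma dotc_sum_smul {ι κ : Type*} [Fintype ι] [Fintype κ] (f : ι → ℂ) (c : κ → ℂ)
    (w : κ → ι → ℂ) :
    dotc f (∑ g : κ, c g • w g) = ∑ g : κ, c g * dotc f (w g) := by
  unfold dotc
  simp only [Finset.sum_apply, Pi.smul_apply, smul_eq_mul, Finset.mul_sum]
  rw [Finset.sum_comm]
  apply Finset.sum_congr rfl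
  intro g _
  apply Finset.sum_congr rfl
  intro v _
  ring


lemma dotc_orbit {m : ℕ} (hm : 0 < m) (g h : Fin (m+1) → Fin 2) :
    dotc (Ug2 (m+1) g *ᵥ psiRect (m+1)) (Ug2 (m+1) h *ᵥ psiRect (m+1))
      = if g = h then 1 else 0 := by
  have hflipinv : Function.Involutive (fun v : Fin (m+1) → Fin 2 => fun j => v j + 1) :=
    fun v => funext fun j => (by decide : ∀ a : Fin 2, a + 1 + 1 = a) (v j)
  have hbij := hflipinv.bijective
  have hzz : g (Fin.last m) = h (Fin.last m) →
      ((fun i : Fin m => g i.castSucc) + (fun i : Fin m => h i.castSucc) = 0 ↔ g = h) := by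
    intro hl
    constructor
    · intro hk
      funext j
      induction j using Fin.lastCases with
      | last => exact hl
      | cast i => exact fin2_eq_of_add_eq_zero _ _ (congrFun hk i)
    · rintro rfl
      funext i
      exact (by decide : ∀ a : Fin 2, a + a = 0) (g i.castSucc)
  rw [Ug2_mulVec, Ug2_mulVec]
  unfold dotc
  have hg2 : g (Fin.last m) = 0 ∨ g (Fin.last m) = 1 := by omega
  have hh2 : h (Fin.last m) = 0 ∨ h (Fin.last m) = 1 := by omega
  rcases hg2 with hgl | hgl <;> rcases hh2 with hhl | hhl <;>
    simp only [hgl, hhl, if_neg (show ¬ ((0:Fin 2) = 1) by decide),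
      eq_self_iff_true, if_true]
  · -- g last = 0, h last = 0
    trans (∑ v : Fin (m+1) → Fin 2,
      chi ((fun i : Fin m => g i.castSucc) + fun i : Fin m => h i.castSucc) v *
        (if (v 0 = 0 ∧ ∀ i : Fin (m+1), i ≠ 0 → v i = 1) ∨
            (v 0 = 1 ∧ ∃ i : Fin (m+1), i ≠ 0 ∧ v i = 1)
         then ((2 : ℂ) ^ m)⁻¹ else 0))
    · exact Finset.sum_congr rfl fun v _ => by
        rw [_root_.map_mul, chi_conj, mul_mul_mul_comm, chi_mul, psiRect_sq]
    · rw [ortho_core hm]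
      exact if_congr (hzz (by rw [hgl, hhl])) rfl rfl
  · -- g last = 0, h last = 1 : cross
    have hne : g ≠ h := fun e => by rw [e, hhl] at hgl; exact absurd hgl (by decide)
    rw [if_neg hne]
    apply Finset.sum_eq_zero
    intro v _
    rw [_root_.map_mul, chi_conj, psiRect_conj]
    have h0 := psiRect_flip v
    linear_combination (chi (fun i : Fin m => g i.castSucc) v *
      chi (fun i : Fin m => h i.castSucc) v) * h0
  · -- g last = 1, h last = 0 : cross
    have hne : g ≠ h := fun e => by rw [e, hhl] at hgl; exact absurd hgl (by decide)
    rw [if_neg hne]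
    apply Finset.sum_eq_zero
    intro v _
    rw [_root_.map_mul, chi_conj, psiRect_conj]
    have h0 := psiRect_flip v
    linear_combination (chi (fun i : Fin m => g i.castSucc) v *
      chi (fun i : Fin m => h i.castSucc) v) * h0
  · -- g last = 1, h last = 1
    trans (∑ v : Fin (m+1) → Fin 2,
      chi ((fun i : Fin m => g i.castSucc) + fun i : Fin m => h i.castSucc) (fun j => v j + 1) *
        (if ((fun j => v j + 1) 0 = 0 ∧ ∀ i : Fin (m+1), i ≠ 0 → (fun j => v j + 1) i = 1) ∨
            ((fun j => v j + 1) 0 = 1 ∧ ∃ i : Fin (m+1), i ≠ 0 ∧ (fun j => v j + 1) i = 1)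
         then ((2 : ℂ) ^ m)⁻¹ else 0))
    · exact Finset.sum_congr rfl fun v _ => by
        rw [_root_.map_mul, chi_conj, mul_mul_mul_comm, chi_mul, psiRect_sq, ← chi_flip]
    · trans (∑ w : Fin (m+1) → Fin 2,
        chi ((fun i : Fin m => g i.castSucc) + fun i : Fin m => h i.castSucc) w *
          (if (w 0 = 0 ∧ ∀ i : Fin (m+1), i ≠ 0 → w i = 1) ∨
              (w 0 = 1 ∧ ∃ i : Fin (m+1), i ≠ 0 ∧ w i = 1)
           then ((2 : ℂ) ^ m)⁻¹ else 0))
      · exact Fintype.sum_bijective _ hbij _ _ (fun v => rfl)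
      · rw [ortho_core hm]
        exact if_congr (hzz (by rw [hgl, hhl])) rfl rfl


end Stmt16Aux

/-!
STATEMENT 16: For n ≥ 2, ψ_rect is a unit vector and its orbit
{U_g ψ_rect : g ∈ {0,1}ⁿ} under G_tetra^{(n)} is an orthonormal basis of (ℂ²)^{⊗n}.
-/
open Stmt16Aux in
theorem stmt16 (n : ℕ) [NeZero n] (hn : 2 ≤ n) :
    dotc (psiRect n) (psiRect n) = 1 ∧
    (∀ g h : Fin n → Fin 2,
      dotc (Ug2 n g *ᵥ psiRect n) (Ug2 n h *ᵥ psiRect n) = if g = h then 1 else 0) ∧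
    Submodule.span ℂ (Set.range fun g : Fin n → Fin 2 => Ug2 n g *ᵥ psiRect n) = ⊤ := by
  obtain ⟨m, rfl⟩ : ∃ m, n = m + 1 := ⟨n - 1, by omega⟩
  have hm : 0 < m := by omega
  have hU0 : Ug2 (m+1) 0 *ᵥ psiRect (m+1) = psiRect (m+1) := by
    rw [Ug2_mulVec]
    funext v
    have h0 : (0 : Fin (m+1) → Fin 2) (Fin.last m) = 0 := rfl
    rw [if_neg (by rw [h0]; decide)]
    have hz : (fun i : Fin m => (0 : Fin (m+1) → Fin 2) i.castSucc) = (0 : Fin m → Fin 2) := rfl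
    rw [hz, chi_zero, one_mul]
  refine ⟨?_, fun g h => dotc_orbit hm g h, ?_⟩
  · have h1 := dotc_orbit hm (0 : Fin (m+1) → Fin 2) 0
    rw [hU0] at h1
    simpa using h1
  · have li : LinearIndependent ℂ
        (fun g : Fin (m+1) → Fin 2 => Ug2 (m+1) g *ᵥ psiRect (m+1)) := by
      rw [Fintype.linearIndependent_iff]
      intro c hc i
      have h1 := congrArg (dotc (Ug2 (m+1) i *ᵥ psiRect (m+1))) hc
      rw [dotc_sum_smul] at h1
      have h2 : dotc (Ug2 (m+1) i *ᵥ psiRect (m+1)) (0 : (Fin (m+1) → Fin 2) → ℂ) = 0 := by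
        simp [dotc]
      rw [h2] at h1
      have h3 : ∀ g : Fin (m+1) → Fin 2,
          c g * dotc (Ug2 (m+1) i *ᵥ psiRect (m+1)) (Ug2 (m+1) g *ᵥ psiRect (m+1))
            = if i = g then c g else 0 := by
        intro g
        rw [dotc_orbit hm i g]
        split_ifs <;> ring
      rw [Finset.sum_congr rfl (fun g _ => h3 g), Finset.sum_ite_eq] at h1
      simpa using h1
    exact li.span_eq_top_of_card_eq_finrank
      (by rw [Module.finrank_fintype_fun_eq_card])
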